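/- Let P be an orthogonal projection with block matrix (x a; a* y) relative to H = H₊ ⊕ H₋, and let λ ∈ (0,1) (λ ≠ 0, 1). Then the restriction of a to the eigenspace N(y - λ) is an injective map into the eigenspace N(x - (1-λ)), and consequently dim N(y - λ) ≤ dim N(x - (1-λ)). By symmetry (using a*), these eigenspaces have equal dimension. -/

import Mathlib

section Aux

variable {H : Type*} [NormedAddCommGroup H] [InnerProductSpace ℂ H]

lemma stmt4_aux (P E : H →L[ℂ] H) (hP2 : P * P = P) (hE2 : E * E = E)
    (lam : ℂ) (h0 : lam ≠ 0) (h1 : lam ≠ 1) :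
    (∀ ξ ∈ LinearMap.ker (((1 - E) * P * (1 - E) - lam • (1 : H →L[ℂ] H) : H →L[ℂ] H) : H →ₗ[ℂ] H),
        (E * P * (1 - E)) ξ ∈ LinearMap.ker ((E * P * E - (1 - lam) • (1 : H →L[ℂ] H) : H →L[ℂ] H) : H →ₗ[ℂ] H)) ∧
    (∀ ξ ∈ LinearMap.ker (((1 - E) * P * (1 - E) - lam • (1 : H →L[ℂ] H) : H →L[ℂ] H) : H →ₗ[ℂ] H),
        (E * P * (1 - E)) ξ = 0 → ξ = 0) := by
  set F : H →L[ℂ] H := 1 - E with hF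
  have hEF : E * F = 0 := by
    rw [hF, mul_sub, mul_one, hE2, sub_self]
  -- operator identities from P * P = P
  have hop1 : E * P * E * P * F + E * P * F * P * F = E * P * F := by
    have h : E * P * E * P * F + E * P * F * P * F = E * (P * P) * F := by
      rw [hF]; noncomm_ring
    rw [h, hP2]
  have hop2 : F * P * E * P * F + F * P * F * P * F = F * P * F := by
    have h : F * P * E * P * F + F * P * F * P * F = F * (P * P) * F := by
      rw [hF]; noncomm_ring
    rw [h, hP2]
  have hm1 : (E * P * E) * (E * P * F) = E * P * E * P * F := by
    have h : (E * P * E) * (E * P * F) = E * P * (E * E) * P * F := by noncomm_ring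
    rw [h, hE2]
  have hm2 : (F * P * E) * (E * P * F) = F * P * E * P * F := by
    have h : (F * P * E) * (E * P * F) = F * P * (E * E) * P * F := by noncomm_ring
    rw [h, hE2]
  -- basic elementwise facts for a kernel element
  have key : ∀ ξ, ξ ∈ LinearMap.ker (((1 - E) * P * (1 - E) - lam • (1 : H →L[ℂ] H) : H →L[ℂ] H) : H →ₗ[ℂ] H) →
      (F * P * F) ξ = lam • ξ ∧ F ξ = ξ := by
    intro ξ hξ
    rw [LinearMap.mem_ker] at hξ
    have h1' : (F * P * F) ξ = lam • ξ := by
      rw [← hF] at hξ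
      simpa [ContinuousLinearMap.sub_apply, ContinuousLinearMap.smul_apply,
        ContinuousLinearMap.one_apply, sub_eq_zero] using hξ
    have hEξ : E ξ = 0 := by
      have h2 : E ((F * P * F) ξ) = lam • E ξ := by rw [h1', map_smul]
      have h3 : E ((F * P * F) ξ) = 0 := by
        have e : E ((F * P * F) ξ) = ((E * F) * (P * F)) ξ := by
          rw [show (E * F) * (P * F) = E * (F * P * F) by noncomm_ring]; rfl
        rw [e, hEF, zero_mul]; rfl
      have h4 : lam • E ξ = 0 := by rw [← h2, h3]
      exact (smul_eq_zero.mp h4).resolve_left h0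
    have hFξ : F ξ = ξ := by
      rw [hF]
      simp [ContinuousLinearMap.sub_apply, ContinuousLinearMap.one_apply, hEξ]
    exact ⟨h1', hFξ⟩
  constructor
  · -- membership
    intro ξ hξ
    obtain ⟨h1', hFξ⟩ := key ξ hξ
    rw [LinearMap.mem_ker]
    have hEPFξ : (E * P * F) ξ = (E * P) ξ := by
      show E (P (F ξ)) = E (P ξ)
      rw [hFξ]
    have hmid : (E * P * F * P * F) ξ = lam • (E * P) ξ := by
      show (E * P) (F (P (F ξ))) = lam • (E * P) ξ
      rw [show F (P (F ξ)) = (F * P * F) ξ from rfl, h1', map_smul]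
    have hsum : (E * P * E * P * F) ξ + (E * P * F * P * F) ξ = (E * P * F) ξ := by
      rw [show (E * P * E * P * F) ξ + (E * P * F * P * F) ξ =
        (E * P * E * P * F + E * P * F * P * F) ξ from rfl, hop1]
    have hval : (E * P * E) ((E * P * F) ξ) = (1 - lam) • (E * P * F) ξ := by
      have e1 : (E * P * E) ((E * P * F) ξ) = ((E * P * E) * (E * P * F)) ξ := rfl
      rw [e1, hm1]
      have : (E * P * E * P * F) ξ = (E * P * F) ξ - (E * P * F * P * F) ξ := by
        rw [← hsum]; abel
      rw [this, hmid, hEPFξ, sub_smul, one_smul]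
    simp only [ContinuousLinearMap.sub_apply, ContinuousLinearMap.smul_apply,
      ContinuousLinearMap.one_apply, ContinuousLinearMap.mul_apply, sub_eq_zero, ContinuousLinearMap.coe_coe]
    exact hval
  · -- injectivity
    intro ξ hξ hz
    obtain ⟨h1', hFξ⟩ := key ξ hξ
    have hFPξ : (F * P) ξ = lam • ξ := by
      have : (F * P) ξ = (F * P * F) ξ := by
        show F (P ξ) = F (P (F ξ)); rw [hFξ]
      rw [this, h1']
    have hterm1 : (F * P * E * P * F) ξ = 0 := by
      rw [show (F * P * E * P * F) ξ = ((F * P * E) * (E * P * F)) ξ by rw [hm2],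
        show ((F * P * E) * (E * P * F)) ξ = (F * P * E) ((E * P * F) ξ) from rfl,
        hz, map_zero]
    have hterm2 : (F * P * F * P * F) ξ = (lam * lam) • ξ := by
      show (F * P) (F (P (F ξ))) = (lam * lam) • ξ
      rw [show F (P (F ξ)) = (F * P * F) ξ from rfl, h1', map_smul, hFPξ,
        smul_smul]
    have hsum : (F * P * E * P * F) ξ + (F * P * F * P * F) ξ = (F * P * F) ξ := by
      rw [show (F * P * E * P * F) ξ + (F * P * F * P * F) ξ =
        (F * P * E * P * F + F * P * F * P * F) ξ from rfl, hop2]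
    rw [hterm1, hterm2, h1', zero_add] at hsum
    have : (lam * lam - lam) • ξ = 0 := by rw [sub_smul, hsum, sub_self]
    have hne : lam * lam - lam ≠ 0 := by
      intro h
      rcases mul_eq_zero.mp (show lam * (lam - 1) = 0 by rw [← h]; ring) with h' | h'
      · exact h0 h'
      · exact h1 (sub_eq_zero.mp h')
    exact (smul_eq_zero.mp this).resolve_left hne

end Aux

/-- For an orthogonal projection `P` with block matrix `(x a; a* y)` relative to
`H = H₊ ⊕ H₋` and `λ ∈ (0,1)`, the entry `a` maps the eigenspace `N(y - λ)` injectively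
into the eigenspace `N(x - (1-λ))`, and these eigenspaces have equal dimension. -/
theorem stmt4 {H : Type*} [NormedAddCommGroup H] [InnerProductSpace ℂ H] [CompleteSpace H]
    (P E : H →L[ℂ] H) (hP : IsSelfAdjoint P) (hP2 : P * P = P)
    (hE : IsSelfAdjoint E) (hE2 : E * E = E)
    (lam : ℝ) (hlam : lam ∈ Set.Ioo (0 : ℝ) 1) :
    (∀ ξ ∈ LinearMap.ker (((1 - E) * P * (1 - E) - (lam : ℂ) • (1 : H →L[ℂ] H) : H →L[ℂ] H) : H →ₗ[ℂ] H),
        (E * P * (1 - E)) ξ ∈ LinearMap.ker ((E * P * E - ((1 - lam : ℝ) : ℂ) • (1 : H →L[ℂ] H) : H →L[ℂ] H) : H →ₗ[ℂ] H)) ∧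
    Set.InjOn (⇑(E * P * (1 - E)))
        (LinearMap.ker (((1 - E) * P * (1 - E) - (lam : ℂ) • (1 : H →L[ℂ] H) : H →L[ℂ] H) : H →ₗ[ℂ] H) : Set H) ∧
    Module.rank ℂ (LinearMap.ker (((1 - E) * P * (1 - E) - (lam : ℂ) • (1 : H →L[ℂ] H) : H →L[ℂ] H) : H →ₗ[ℂ] H)) =
      Module.rank ℂ (LinearMap.ker ((E * P * E - ((1 - lam : ℝ) : ℂ) • (1 : H →L[ℂ] H) : H →L[ℂ] H) : H →ₗ[ℂ] H)) := by
  have hc : ((1 - lam : ℝ) : ℂ) = 1 - (lam : ℂ) := by push_cast; ring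
  rw [hc]
  have h0 : (lam : ℂ) ≠ 0 := by
    exact_mod_cast hlam.1.ne'
  have h1 : (lam : ℂ) ≠ 1 := by
    exact_mod_cast hlam.2.ne
  obtain ⟨hmem, hinj0⟩ := stmt4_aux P E hP2 hE2 (lam : ℂ) h0 h1
  -- symmetric version
  have hE2' : (1 - E) * (1 - E) = 1 - E := by
    have h : (1 - E) * (1 - E) = 1 - E - E + E * E := by noncomm_ring
    rw [h, hE2]; abel
  have h0' : (1 : ℂ) - (lam : ℂ) ≠ 0 := sub_ne_zero.mpr (Ne.symm h1)
  have h1' : (1 : ℂ) - (lam : ℂ) ≠ 1 := fun h => h0 (sub_eq_self.mp h)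
  obtain ⟨hmem', hinj0'⟩ := stmt4_aux P (1 - E) hP2 hE2' (1 - (lam : ℂ)) h0' h1'
  simp only [sub_sub_cancel] at hmem' hinj0'
  refine ⟨hmem, ?_, ?_⟩
  · -- injectivity on the kernel
    intro ξ hξ η hη hEq
    have hmemsub : ξ - η ∈ LinearMap.ker (((1 - E) * P * (1 - E) - (lam : ℂ) • (1 : H →L[ℂ] H) : H →L[ℂ] H) : H →ₗ[ℂ] H) :=
      sub_mem hξ hη
    have hz : (E * P * (1 - E)) (ξ - η) = 0 := by
      rw [map_sub, hEq, sub_self]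
    have := hinj0 (ξ - η) hmemsub hz
    exact sub_eq_zero.mp this
  · -- equal ranks
    set K₁ := LinearMap.ker (((1 - E) * P * (1 - E) - (lam : ℂ) • (1 : H →L[ℂ] H) : H →L[ℂ] H) : H →ₗ[ℂ] H)
    set K₂ := LinearMap.ker ((E * P * E - (1 - (lam : ℂ)) • (1 : H →L[ℂ] H) : H →L[ℂ] H) : H →ₗ[ℂ] H)
    have hf : ∀ x ∈ K₁, ((E * P * (1 - E) : H →L[ℂ] H) : H →ₗ[ℂ] H) x ∈ K₂ :=
      fun x hx => hmem x hx
    have hg : ∀ x ∈ K₂, (((1 - E) * P * E : H →L[ℂ] H) : H →ₗ[ℂ] H) x ∈ K₁ :=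
      fun x hx => hmem' x hx
    let f : K₁ →ₗ[ℂ] K₂ :=
      LinearMap.restrict ((E * P * (1 - E) : H →L[ℂ] H) : H →ₗ[ℂ] H) hf
    let g : K₂ →ₗ[ℂ] K₁ :=
      LinearMap.restrict (((1 - E) * P * E : H →L[ℂ] H) : H →ₗ[ℂ] H) hg
    have hfinj : Function.Injective f := by
      rw [injective_iff_map_eq_zero]
      intro z hz
      have : (E * P * (1 - E)) z.1 = 0 := congrArg Subtype.val hz
      exact Subtype.ext (hinj0 z.1 z.2 this)
    have hginj : Function.Injective g := by
      rw [injective_iff_map_eq_zero]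
      intro z hz
      have : ((1 - E) * P * E) z.1 = 0 := congrArg Subtype.val hz
      exact Subtype.ext (hinj0' z.1 z.2 this)
    exact le_antisymm (LinearMap.rank_le_of_injective f hfinj)
      (LinearMap.rank_le_of_injective g hginj)
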